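/- Let d ≥ 1 be a natural number, D > 0, m > 0, c > 0, let Y be a real normed vector space, and let y⋆ : [0, D]^d → Y (with [0, D]^d ⊆ ℝ^d carrying the supremum norm) satisfy the lower Lipschitz (expansion) bound ‖y⋆(x) − y⋆(x')‖ ≥ c·‖x − x'‖_∞ for all x, x' ∈ [0, D]^d. Suppose S is a finite subset of [0, D]^d such that every point of the solution manifold y⋆([0, D]^d) lies within distance m of some point of {y⋆(s) : s ∈ S} (i.e., the labels associated with S form an m-cover of the solution manifold). Then |S| ≥ (c·D / (2m))^d. (Quantitative instantiation of Proposition 4's geometric scaling law N_warm ≳ (L·diam(X)/m_θ)^{d_eff}: covering the solution manifold at the basin resolution m requires a number of labeled samples growing like (D/m)^d.) -/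

import Mathlib

open MeasureTheory Metric ENNReal

/-- Quantitative instantiation of Proposition 4's geometric scaling law:
if the labels of a finite training set S ⊆ [0,D]^d form an m-cover of the
solution manifold and the solution map expands distances by a factor c, then
|S| ≥ (c·D/(2m))^d. -/
theorem warm_start_sample_complexity_lower_bound
    (d : ℕ) (hd : 1 ≤ d) (D m c : ℝ) (hD : 0 < D) (hm : 0 < m) (hc : 0 < c)
    {Y : Type*} [NormedAddCommGroup Y] [NormedSpace ℝ Y]
    (ystar : (Fin d → ℝ) → Y)
    (hexp : ∀ x ∈ Set.Icc (0 : Fin d → ℝ) (fun _ => D),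
      ∀ x' ∈ Set.Icc (0 : Fin d → ℝ) (fun _ => D),
        c * ‖x - x'‖ ≤ ‖ystar x - ystar x'‖)
    (S : Finset (Fin d → ℝ))
    (hS : (S : Set (Fin d → ℝ)) ⊆ Set.Icc (0 : Fin d → ℝ) (fun _ => D))
    (hcov : ∀ x ∈ Set.Icc (0 : Fin d → ℝ) (fun _ => D),
      ∃ s ∈ S, ‖ystar x - ystar s‖ ≤ m) :
    (c * D / (2 * m)) ^ d ≤ (S.card : ℝ) := by
  set r : ℝ := m / c with hr
  have hrpos : 0 < r := div_pos hm hc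
  -- covering in input space
  have hsub : Set.Icc (0 : Fin d → ℝ) (fun _ => D) ⊆ ⋃ s ∈ S, closedBall s r := by
    intro x hx
    obtain ⟨s, hsS, hns⟩ := hcov x hx
    have hxs : c * ‖x - s‖ ≤ m := le_trans (hexp x hx s (hS hsS)) hns
    have : ‖x - s‖ ≤ r := by
      rw [hr, le_div_iff₀ hc]; linarith [hxs]
    exact Set.mem_biUnion hsS (by simpa [dist_eq_norm] using this)
  -- volume bound
  have hball : ∀ s : Fin d → ℝ, volume (closedBall s r) = ENNReal.ofReal (2 * r) ^ d := by
    intro s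
    rw [closedBall_pi s hrpos.le, volume_pi_pi]
    simp [Real.volume_closedBall, mul_comm]
  have hcube : volume (Set.Icc (0 : Fin d → ℝ) (fun _ => D)) = ENNReal.ofReal D ^ d := by
    rw [Real.volume_Icc_pi]; simp
  have hmeas : ENNReal.ofReal D ^ d ≤ (S.card : ℝ≥0∞) * ENNReal.ofReal (2 * r) ^ d := by
    calc ENNReal.ofReal D ^ d = volume (Set.Icc (0 : Fin d → ℝ) (fun _ => D)) := hcube.symm
      _ ≤ volume (⋃ s ∈ S, closedBall s r) := measure_mono hsub
      _ ≤ ∑ s ∈ S, volume (closedBall s r) := measure_biUnion_finset_le S _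
      _ = (S.card : ℝ≥0∞) * ENNReal.ofReal (2 * r) ^ d := by
          simp [hball, Finset.sum_const, nsmul_eq_mul]
  have h2r : (0:ℝ) < 2 * r := by linarith
  have hreal : D ^ d ≤ (S.card : ℝ) * (2 * r) ^ d := by
    have := hmeas
    rw [← ENNReal.ofReal_pow hD.le, ← ENNReal.ofReal_pow h2r.le,
      ← ENNReal.ofReal_natCast S.card, ← ENNReal.ofReal_mul (by positivity)] at this
    exact (ENNReal.ofReal_le_ofReal_iff (by positivity)).mp this
  have hrw : c * D / (2 * m) = D / (2 * r) := by
    field_simp [hr]; rw [hr]; field_simp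
  rw [hrw, div_pow, div_le_iff₀ (by positivity)]
  linarith [hreal]
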